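/- Let d ≥ 2, μ ≥ 0, and let f(η) = √(|η|² + μ²), defined for η ∈ ℝ^d with |η|² + μ² > 0. Fix j ∈ {1,...,d} and let M(η) be the (d−1)×(d−1) matrix obtained from the Hessian of f at η by deleting the j-th row and j-th column, i.e. M(η) = (∂²f/∂η_k∂η_l(η))_{k,l ≠ j}. Then det M(η) = (η_j² + μ²)(|η|² + μ²)^{−(d+1)/2}. In particular, for any 0 < ε ≤ R and μ ∈ [0,1], one has det M(η) ≥ ε² (R² + 1)^{−(d+1)/2} whenever |η_j| ≥ ε and |η| ≤ R. -/

import Mathlib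

/-- The Hessian matrix of `f(η) = √(|η|² + μ²)` at `η`. -/
noncomputable def hessKG {d : ℕ} (μ : ℝ) (η : Fin d → ℝ) : Matrix (Fin d) (Fin d) ℝ :=
  Matrix.of fun k l =>
    fderiv ℝ
      (fun η' : Fin d → ℝ =>
        fderiv ℝ (fun η'' : Fin d → ℝ => Real.sqrt ((∑ i, η'' i ^ 2) + μ ^ 2)) η'
          (Pi.single l 1))
      η (Pi.single k 1)

/-- The `(d-1)×(d-1)` submatrix of the Hessian of `f(η) = √(|η|² + μ²)` obtained by
deleting the `j`-th row and `j`-th column. -/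
noncomputable def hessKGsub {d : ℕ} (μ : ℝ) (η : Fin d → ℝ) (j : Fin d) :
    Matrix {k : Fin d // k ≠ j} {k : Fin d // k ≠ j} ℝ :=
  Matrix.of fun k l => hessKG μ η (k : Fin d) (l : Fin d)


open Real Filter

variable {d : ℕ}

private lemma hasFDerivAt_Qfun (μ : ℝ) (x : Fin d → ℝ) :
    HasFDerivAt (fun η : Fin d → ℝ => (∑ i, η i ^ 2) + μ ^ 2)
      (∑ i, (2 * x i) • (ContinuousLinearMap.proj i : (Fin d → ℝ) →L[ℝ] ℝ)) x := by
  have h : ∀ i ∈ Finset.univ, HasFDerivAt (fun η : Fin d → ℝ => η i ^ 2)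
      ((2 * x i) • (ContinuousLinearMap.proj i : (Fin d → ℝ) →L[ℝ] ℝ)) x := by
    intro i _
    have h1 := (ContinuousLinearMap.proj i : (Fin d → ℝ) →L[ℝ] ℝ).hasFDerivAt (x := x)
    have h2 := h1.fun_mul h1
    simpa [pow_two, two_mul, add_smul] using h2
  simpa using (HasFDerivAt.sum h).add_const (μ ^ 2)

private lemma sqrtQ_hasFDerivAt {μ : ℝ} {x : Fin d → ℝ} (hx : 0 < (∑ i, x i ^ 2) + μ ^ 2) :
    HasFDerivAt (fun η : Fin d → ℝ => Real.sqrt ((∑ i, η i ^ 2) + μ ^ 2))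
      ((1 / (2 * Real.sqrt ((∑ i, x i ^ 2) + μ ^ 2))) •
        ∑ i, (2 * x i) • (ContinuousLinearMap.proj i : (Fin d → ℝ) →L[ℝ] ℝ)) x :=
  (Real.hasDerivAt_sqrt hx.ne').comp_hasFDerivAt x (hasFDerivAt_Qfun μ x)

private lemma grad_eval {μ : ℝ} {x : Fin d → ℝ} (hx : 0 < (∑ i, x i ^ 2) + μ ^ 2) (l : Fin d) :
    fderiv ℝ (fun η : Fin d → ℝ => Real.sqrt ((∑ i, η i ^ 2) + μ ^ 2)) x (Pi.single l 1)
      = x l / Real.sqrt ((∑ i, x i ^ 2) + μ ^ 2) := by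
  have hs : Real.sqrt ((∑ i, x i ^ 2) + μ ^ 2) ≠ 0 := (Real.sqrt_pos.2 hx).ne'
  rw [(sqrtQ_hasFDerivAt hx).fderiv]
  simp only [ContinuousLinearMap.smul_apply, ContinuousLinearMap.sum_apply,
    ContinuousLinearMap.smul_apply, ContinuousLinearMap.proj_apply, Pi.single_apply,
    smul_eq_mul, mul_ite, mul_one, mul_zero]
  rw [Finset.sum_ite_eq' Finset.univ l (fun i => 2 * x i)]
  simp only [Finset.mem_univ, if_true]
  field_simp

private lemma hess_entry {μ : ℝ} {x : Fin d → ℝ} (hx : 0 < (∑ i, x i ^ 2) + μ ^ 2)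
    (k l : Fin d) :
    hessKG μ x k l = (if k = l then 1 else 0) / Real.sqrt ((∑ i, x i ^ 2) + μ ^ 2)
      - x k * x l / (Real.sqrt ((∑ i, x i ^ 2) + μ ^ 2) * ((∑ i, x i ^ 2) + μ ^ 2)) := by
  set Q : (Fin d → ℝ) → ℝ := fun η => (∑ i, η i ^ 2) + μ ^ 2 with hQdef
  have hQcont : Continuous Q := by
    apply Continuous.add _ continuous_const
    exact continuous_finset_sum _ fun i _ => (continuous_apply i).pow 2
  have hopen : IsOpen {y : Fin d → ℝ | 0 < Q y} := isOpen_lt continuous_const hQcont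
  have heq : (fun η' : Fin d → ℝ =>
      fderiv ℝ (fun η'' : Fin d → ℝ => Real.sqrt ((∑ i, η'' i ^ 2) + μ ^ 2)) η'
        (Pi.single l 1)) =ᶠ[nhds x] fun η' => η' l * (Real.sqrt (Q η'))⁻¹ := by
    filter_upwards [hopen.mem_nhds hx] with y hy
    rw [grad_eval hy l, div_eq_mul_inv]
  have hs : (0:ℝ) < Real.sqrt (Q x) := Real.sqrt_pos.2 hx
  have hproj : HasFDerivAt (fun η' : Fin d → ℝ => η' l)
      (ContinuousLinearMap.proj l : (Fin d → ℝ) →L[ℝ] ℝ) x :=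
    (ContinuousLinearMap.proj l : (Fin d → ℝ) →L[ℝ] ℝ).hasFDerivAt
  have hinv : HasFDerivAt (fun η' : Fin d → ℝ => (Real.sqrt (Q η'))⁻¹)
      ((-(Real.sqrt (Q x) ^ 2)⁻¹) • ((1 / (2 * Real.sqrt (Q x))) •
        ∑ i, (2 * x i) • (ContinuousLinearMap.proj i : (Fin d → ℝ) →L[ℝ] ℝ))) x :=
    (hasDerivAt_inv hs.ne').comp_hasFDerivAt x (sqrtQ_hasFDerivAt hx)
  have hmul := hproj.mul hinv
  have hfd : fderiv ℝ (fun η' : Fin d → ℝ => η' l * (Real.sqrt (Q η'))⁻¹) x = _ := hmul.fderiv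
  show fderiv ℝ _ x (Pi.single k 1) = _
  rw [heq.fderiv_eq, hfd]
  have hsq : Real.sqrt (Q x) ^ 2 = Q x := Real.sq_sqrt hx.le
  simp only [ContinuousLinearMap.add_apply, ContinuousLinearMap.smul_apply,
    ContinuousLinearMap.sum_apply, ContinuousLinearMap.proj_apply, Pi.single_apply,
    smul_eq_mul, mul_ite, mul_one, mul_zero]
  rw [Finset.sum_ite_eq' Finset.univ k (fun i => 2 * x i)]
  simp only [Finset.mem_univ, if_true, hsq]
  have hQne : Q x ≠ 0 := hx.ne'
  rcases eq_or_ne k l with rfl | hkl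
  · simp only [if_pos rfl, if_true]
    field_simp
    ring
  · rw [if_neg hkl, if_neg (fun h => hkl h.symm)]
    field_simp
    ring

/-- **Reduced Hessian determinant of the Klein–Gordon symbol.** For `f(η) = √(|η|² + μ²)`
with `|η|² + μ² > 0`, the submatrix `M(η)` of the Hessian in the variables `η^{(j)}`
satisfies `det M(η) = (η_j² + μ²)(|η|² + μ²)^{-(d+1)/2}`; in particular, for `0 < ε ≤ R`
and `μ ∈ [0,1]`, `det M(η) ≥ ε² (R² + 1)^{-(d+1)/2}` whenever `|η_j| ≥ ε` and `|η| ≤ R`. -/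
theorem stmt_8 (d : ℕ) (hd : 2 ≤ d) (μ : ℝ) (hμ : 0 ≤ μ) (η : Fin d → ℝ)
    (hQ : 0 < (∑ i, η i ^ 2) + μ ^ 2) (j : Fin d) :
    (hessKGsub μ η j).det =
        (η j ^ 2 + μ ^ 2) * ((∑ i, η i ^ 2) + μ ^ 2) ^ (-((d : ℝ) + 1) / 2) ∧
      ∀ ε R : ℝ, 0 < ε → ε ≤ R → μ ≤ 1 → ε ≤ |η j| → Real.sqrt (∑ i, η i ^ 2) ≤ R →
        ε ^ 2 * (R ^ 2 + 1) ^ (-((d : ℝ) + 1) / 2) ≤ (hessKGsub μ η j).det := by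
  have hs : (0:ℝ) < Real.sqrt ((∑ i, η i ^ 2) + μ ^ 2) := Real.sqrt_pos.2 hQ
  have hsq : Real.sqrt ((∑ i, η i ^ 2) + μ ^ 2) ^ 2 = (∑ i, η i ^ 2) + μ ^ 2 :=
    Real.sq_sqrt hQ.le
  set s := Real.sqrt ((∑ i, η i ^ 2) + μ ^ 2) with hsdef
  have hM : hessKGsub μ η j = s⁻¹ •
      (1 + Matrix.replicateCol Unit (fun k : {k : Fin d // k ≠ j} => -(η k / s)) *
        Matrix.replicateRow Unit (fun k : {k : Fin d // k ≠ j} => η k / s)) := by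
    ext k l
    have hE := hess_entry hQ (k : Fin d) (l : Fin d)
    simp only [hessKGsub, Matrix.of_apply, hE, Matrix.smul_apply, Matrix.add_apply,
      Matrix.one_apply, Matrix.mul_apply, Matrix.replicateCol_apply, Matrix.replicateRow_apply,
      Finset.univ_unique, Finset.sum_singleton, smul_eq_mul, ← hsdef]
    rcases eq_or_ne k l with rfl | hkl
    · simp only [if_pos rfl]
      rw [← hsq]; field_simp; ring
    · have hkl' : ((k : Fin d)) ≠ ((l : Fin d)) := fun h => hkl (Subtype.ext h)
      simp only [if_neg hkl, if_neg hkl']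
      rw [← hsq]; field_simp
      ring
  have hcard : Fintype.card {k : Fin d // k ≠ j} = d - 1 := by
    have h := Fintype.card_subtype_compl (fun k : Fin d => k = j)
    simp only [Fintype.card_subtype_eq, Fintype.card_fin] at h
    exact h
  have hsum : (∑ k : {k : Fin d // k ≠ j}, η (k : Fin d) ^ 2)
      = (∑ i, η i ^ 2) - η j ^ 2 := by
    rw [← Finset.sum_subtype (Finset.univ.erase j) (fun x => by simp) (fun i => η i ^ 2)]
    rw [Finset.sum_erase_eq_sub (Finset.mem_univ j)]
  have hdot : dotProduct (fun k : {k : Fin d // k ≠ j} => η (k : Fin d) / s)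
      (fun k : {k : Fin d // k ≠ j} => -(η (k : Fin d) / s))
      = -(((∑ i, η i ^ 2) - η j ^ 2) / ((∑ i, η i ^ 2) + μ ^ 2)) := by
    have hterm : ∀ k : {k : Fin d // k ≠ j},
        η (k : Fin d) / s * -(η (k : Fin d) / s)
          = -(η (k : Fin d) ^ 2 / ((∑ i, η i ^ 2) + μ ^ 2)) := by
      intro k; rw [← hsq]; field_simp
    rw [dotProduct, Finset.sum_congr rfl (fun k _ => hterm k),
      Finset.sum_neg_distrib, ← Finset.sum_div, hsum]
  have key : (hessKGsub μ η j).det =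
      (η j ^ 2 + μ ^ 2) * ((∑ i, η i ^ 2) + μ ^ 2) ^ (-((d : ℝ) + 1) / 2) := by
    have h1d : (1:ℕ) ≤ d := by omega
    have hinv : s⁻¹ = ((∑ i, η i ^ 2) + μ ^ 2) ^ (-(1/2) : ℝ) := by
      rw [hsdef, Real.sqrt_eq_rpow, ← Real.rpow_neg hQ.le]
    have hpow : (((∑ i, η i ^ 2) + μ ^ 2) ^ (-(1/2) : ℝ)) ^ (d - 1)
        = ((∑ i, η i ^ 2) + μ ^ 2) ^ ((-(1/2) : ℝ) * ((d:ℝ) - 1)) := by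
      rw [← Real.rpow_natCast ((((∑ i, η i ^ 2) + μ ^ 2)) ^ (-(1/2) : ℝ)) (d - 1),
        ← Real.rpow_mul hQ.le]
      congr 1
      rw [Nat.cast_sub h1d]
      push_cast; ring
    have hfrac : 1 + -(((∑ i, η i ^ 2) - η j ^ 2) / ((∑ i, η i ^ 2) + μ ^ 2))
        = (η j ^ 2 + μ ^ 2) * ((∑ i, η i ^ 2) + μ ^ 2)⁻¹ := by
      field_simp
      ring
    have hsplit : ((∑ i, η i ^ 2) + μ ^ 2) ^ (-((d : ℝ) + 1) / 2)
        = ((∑ i, η i ^ 2) + μ ^ 2) ^ ((-(1/2) : ℝ) * ((d:ℝ) - 1))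
          * ((∑ i, η i ^ 2) + μ ^ 2)⁻¹ := by
      rw [show -((d:ℝ)+1)/2 = (-(1/2) : ℝ) * ((d:ℝ) - 1) + (-1) by ring,
        Real.rpow_add hQ, Real.rpow_neg_one]
    rw [hM, Matrix.det_smul, Matrix.det_one_add_replicateCol_mul_replicateRow, hcard, hdot, hinv, hpow,
      hfrac, hsplit]
    ring
  refine ⟨key, ?_⟩
  intro ε R hε hεR hμ1 hεj hR
  rw [key]
  have hS0 : (0:ℝ) ≤ ∑ i, η i ^ 2 := Finset.sum_nonneg fun i _ => sq_nonneg _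
  have hQle : (∑ i, η i ^ 2) + μ ^ 2 ≤ R ^ 2 + 1 := by
    have h1 : (∑ i, η i ^ 2) ≤ R ^ 2 := by
      nlinarith [Real.sq_sqrt hS0, Real.sqrt_nonneg (∑ i, η i ^ 2)]
    nlinarith
  have he : -((d : ℝ) + 1) / 2 ≤ 0 := by
    have hdn : (0:ℝ) ≤ (d : ℝ) := Nat.cast_nonneg d
    linarith
  have hr : (R ^ 2 + 1) ^ (-((d : ℝ) + 1) / 2) ≤
      ((∑ i, η i ^ 2) + μ ^ 2) ^ (-((d : ℝ) + 1) / 2) :=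
    Real.rpow_le_rpow_of_nonpos hQ hQle he
  have hε2 : ε ^ 2 ≤ η j ^ 2 + μ ^ 2 := by
    nlinarith [sq_abs (η j), abs_nonneg (η j)]
  exact mul_le_mul hε2 hr (Real.rpow_nonneg (by positivity) _) (by positivity)
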